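/- Let n ≥ 1 and let a < b be reals. Let f : ℝ × ℝⁿ → ℝⁿ be any function, let V̄ : ℝ × ℝⁿ → ℝ be continuously differentiable, let ρ : ℝ → ℝ be differentiable with ρ(t) > 0 for all t ∈ [a,b], let μ : ℝ × ℝⁿ → ℝ be any function, let ℓ : ℝ × ℝⁿ → ℝ satisfy ℓ(t,x) ≥ 0 for all (t,x), and let ε ∈ ℝ. Assume that for all (t,x) ∈ ℝ × ℝⁿ: ∂V̄/∂t(t,x) + ⟨∇ₓV̄(t,x), f(t,x)⟩ − ρ′(t) + μ(t,x)(ρ(t) − V̄(t,x)) + ℓ(t,x)(t−a)(b−t) ≤ ε. Define V(t,x) = V̄(t,x)/ρ(t). Then for every t ∈ [a,b] and every x ∈ ℝⁿ with V̄(t,x) = ρ(t) (equivalently V(t,x) = 1), one has ∂V/∂t(t,x) + ⟨∇ₓV(t,x), f(t,x)⟩ ≤ ε/ρ(t). -/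

import Mathlib

open Set

/-- Soundness of the S-procedure constraint of Section 3 of the paper: if on all of
`ℝ × ℝⁿ` the constraint
`∂V̄/∂t + ⟨∇ₓV̄, f⟩ − ρ' + μ·(ρ − V̄) + ℓ·(t−a)(b−t) ≤ ε`
holds with `ℓ ≥ 0`, then for every `t ∈ [a,b]` and `x` on the level set `V̄(t,x) = ρ(t)`
(i.e. `V(t,x) = 1` for `V = V̄/ρ`), the Lyapunov derivative of the rescaled function
`V = V̄/ρ` is at most `ε/ρ(t)`. -/
theorem s_procedure_soundness
    (n : ℕ) (hn : 1 ≤ n) (a b : ℝ) (hab : a < b)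
    (f : ℝ × EuclideanSpace ℝ (Fin n) → EuclideanSpace ℝ (Fin n))
    (Vbar : ℝ × EuclideanSpace ℝ (Fin n) → ℝ) (hVbar : ContDiff ℝ 1 Vbar)
    (ρ : ℝ → ℝ) (hρ : Differentiable ℝ ρ) (hρpos : ∀ t ∈ Icc a b, 0 < ρ t)
    (μ : ℝ × EuclideanSpace ℝ (Fin n) → ℝ)
    (ℓ : ℝ × EuclideanSpace ℝ (Fin n) → ℝ)
    (hℓ : ∀ p : ℝ × EuclideanSpace ℝ (Fin n), 0 ≤ ℓ p)
    (ε : ℝ)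
    (hcon : ∀ t : ℝ, ∀ x : EuclideanSpace ℝ (Fin n),
      deriv (fun s => Vbar (s, x)) t
        + fderiv ℝ (fun y => Vbar (t, y)) x (f (t, x))
        - deriv ρ t + μ (t, x) * (ρ t - Vbar (t, x))
        + ℓ (t, x) * (t - a) * (b - t) ≤ ε) :
    ∀ t ∈ Icc a b, ∀ x : EuclideanSpace ℝ (Fin n), Vbar (t, x) = ρ t →
      deriv (fun s => Vbar (s, x) / ρ s) t
        + fderiv ℝ (fun y => Vbar (t, y) / ρ t) x (f (t, x)) ≤ ε / ρ t := by
  intro t ht x hlev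
  have hρt : 0 < ρ t := hρpos t ht
  have hρne : ρ t ≠ 0 := ne_of_gt hρt
  have hVdiff : Differentiable ℝ Vbar := hVbar.differentiable one_ne_zero
  have hg : DifferentiableAt ℝ (fun s => Vbar (s, x)) t :=
    (hVdiff (t, x)).comp t (differentiableAt_id.prodMk (differentiableAt_const _))
  -- derivative of the quotient in t
  have hderiv : deriv (fun s => Vbar (s, x) / ρ s) t
      = (deriv (fun s => Vbar (s, x)) t - deriv ρ t) / ρ t := by
    rw [deriv_fun_div hg (hρ t) hρne, hlev]
    field_simp
  -- fderiv of the scaled function in x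
  have hfd : fderiv ℝ (fun y => Vbar (t, y) / ρ t) x (f (t, x))
      = fderiv ℝ (fun y => Vbar (t, y)) x (f (t, x)) / ρ t := by
    have hx : DifferentiableAt ℝ (fun y => Vbar (t, y)) x :=
      (hVdiff (t, x)).comp x ((differentiableAt_const _).prodMk differentiableAt_id)
    have he : (fun y => Vbar (t, y) / ρ t) = fun y => (ρ t)⁻¹ * Vbar (t, y) := by
      funext y; rw [div_eq_inv_mul]
    rw [he, fderiv_const_mul hx]
    simp [div_eq_inv_mul]
  rw [hderiv, hfd, ← add_div, div_le_div_iff_of_pos_right hρt]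
  have h := hcon t x
  rw [hlev, sub_self, mul_zero, add_zero] at h
  have hℓ' : 0 ≤ ℓ (t, x) * (t - a) * (b - t) :=
    mul_nonneg (mul_nonneg (hℓ _) (sub_nonneg.mpr ht.1)) (sub_nonneg.mpr ht.2)
  linarith
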